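/- Let X be a real Banach space, p ≥ 1, B : X → X a continuous linear operator with B^p = 0, and f : ℝ → X a p times differentiable function. Define iterates u₀(t) = 0 and u_n(t) = −f(t) + B(u_{n−1}'(t)) for n = 1,…,p. Then u_n(t) = −Σ_{k=0}^{n−1} B^k (f^{(k)}(t)) for every n ≤ p (in particular each u_n is differentiable, so the recursion is well defined), and u_p satisfies B(u_p'(t)) = u_p(t) + f(t) for all t. -/

import Mathlib

/-- key derivative computation -/
lemma stmt11_aux
    {X : Type*} [NormedAddCommGroup X] [NormedSpace ℝ X]
    (B : X →L[ℝ] X)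
    (f : ℝ → X) (n : ℕ) (hf : ∀ k < n, Differentiable ℝ (iteratedDeriv k f))
    (t : ℝ) :
    HasDerivAt (fun s => -∑ k ∈ Finset.range n, (B ^ k) (iteratedDeriv k f s))
      (-∑ k ∈ Finset.range n, (B ^ k) (iteratedDeriv (k + 1) f t)) t := by
  refine HasDerivAt.neg (HasDerivAt.fun_sum fun k hk => ?_)
  have hd : HasDerivAt (iteratedDeriv k f) (iteratedDeriv (k + 1) f t) t := by
    have := ((hf k (Finset.mem_range.mp hk)) t).hasDerivAt
    rwa [iteratedDeriv_succ]
  exact (B ^ k).hasFDerivAt.comp_hasDerivAt t hd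

/-- for nilpotent `B` (`B ^ p = 0`, `p ≥ 1`) and `p` times
differentiable `f`, the iterates `u 0 = 0`, `u (n+1) t = -f t + B ((u n)' t)`
satisfy the closed form `u n t = -∑_{k<n} B^k (f^{(k)} t)` for all `n ≤ p`
(so each iterate is differentiable and the recursion is well defined), and
`u p` solves `B x' = x + f`. -/
theorem stmt11
    {X : Type*} [NormedAddCommGroup X] [NormedSpace ℝ X] [CompleteSpace X]
    (p : ℕ) (hp : 1 ≤ p)
    (B : X →L[ℝ] X) (hBp : B ^ p = 0)
    (f : ℝ → X) (hf : ∀ k < p, Differentiable ℝ (iteratedDeriv k f))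
    (u : ℕ → ℝ → X)
    (hu0 : ∀ t : ℝ, u 0 t = 0)
    (hurec : ∀ n < p, ∀ t : ℝ, u (n + 1) t = -f t + B (deriv (u n) t)) :
    (∀ n ≤ p, ∀ t : ℝ,
        u n t = -∑ k ∈ Finset.range n, (B ^ k) (iteratedDeriv k f t)) ∧
      ∀ t : ℝ, B (deriv (u p) t) = u p t + f t := by
  have hcf : ∀ n ≤ p, ∀ t : ℝ,
      u n t = -∑ k ∈ Finset.range n, (B ^ k) (iteratedDeriv k f t) := by
    intro n
    induction n with
    | zero => intro _ t; simp [hu0 t]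
    | succ n ih =>
      intro hn t
      have hnp : n < p := hn
      have hun : u n = fun s => -∑ k ∈ Finset.range n, (B ^ k) (iteratedDeriv k f s) :=
        funext fun s => ih (le_of_lt hnp) s
      have hder : deriv (u n) t
          = -∑ k ∈ Finset.range n, (B ^ k) (iteratedDeriv (k + 1) f t) := by
        rw [hun]
        exact (stmt11_aux B f n (fun k hk => hf k (hk.trans hnp)) t).deriv
      have hterm : ∀ k : ℕ, B ((B ^ k) (iteratedDeriv (k + 1) f t))
          = (B ^ (k + 1)) (iteratedDeriv (k + 1) f t) := fun k => by
        rw [pow_succ']; rfl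
      rw [hurec n hnp t, hder, map_neg, map_sum, Finset.sum_range_succ']
      simp only [iteratedDeriv_zero, pow_zero, ContinuousLinearMap.one_apply, hterm]
      abel
  refine ⟨hcf, fun t => ?_⟩
  have hup : u p = fun s => -∑ k ∈ Finset.range p, (B ^ k) (iteratedDeriv k f s) :=
    funext fun s => hcf p le_rfl s
  have hder : deriv (u p) t
      = -∑ k ∈ Finset.range p, (B ^ k) (iteratedDeriv (k + 1) f t) := by
    rw [hup]
    exact (stmt11_aux B f p hf t).deriv
  rw [hder, map_neg, map_sum]
  have hshift : ∑ k ∈ Finset.range p, B ((B ^ k) (iteratedDeriv (k + 1) f t))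
      = ∑ k ∈ Finset.range p, (B ^ (k + 1)) (iteratedDeriv (k + 1) f t) := by
    refine Finset.sum_congr rfl fun k _ => ?_
    rw [pow_succ']
    rfl
  rw [hshift]
  have hfull : ∑ k ∈ Finset.range (p + 1), (B ^ k) (iteratedDeriv k f t)
      = ∑ k ∈ Finset.range p, (B ^ (k + 1)) (iteratedDeriv (k + 1) f t)
        + (B ^ 0) (iteratedDeriv 0 f t) := Finset.sum_range_succ' _ p
  have hfull2 : ∑ k ∈ Finset.range (p + 1), (B ^ k) (iteratedDeriv k f t)
      = ∑ k ∈ Finset.range p, (B ^ k) (iteratedDeriv k f t) := by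
    rw [Finset.sum_range_succ, hBp]
    simp
  have := hfull.symm.trans hfull2
  simp only [pow_zero, ContinuousLinearMap.one_apply, iteratedDeriv_zero] at this
  rw [hcf p le_rfl t, ← this]
  abel
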